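/- Let u : ℝ^J → ℝ ∪ {−∞} be upper semicontinuous and concave with u(x⁰) finite, and suppose u(x + r·g) > u(x) whenever u(x) > −∞ and r > 0. Then the indifference price function D(x) := sup{r ∈ ℝ : u(x⁰ + x − r·g) ≥ u(x⁰)} is concave and upper semicontinuous, satisfies D(0) = 0, and satisfies D(x + r·g) = D(x) + r for every x with D(x) > −∞ and every r ∈ ℝ. -/
import Mathlib


open scoped BigOperators
open Metric Filter

noncomputable section

/-- The inner product `p·y = ∑ j, p j * y j`. -/
def dotp {J : Type*} [Fintype J] (p y : EuclideanSpace ℝ J) : ℝ := ∑ j, p j * y j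

/-- A function `u : ℝ^J → ℝ ∪ {±∞}` is concave iff its hypograph is convex. -/
def HypoConcave {J : Type*} [Fintype J] (u : EuclideanSpace ℝ J → EReal) : Prop :=
  Convex ℝ {q : EuclideanSpace ℝ J × ℝ | (q.2 : EReal) ≤ u q.1}

/-- Indifference price function `D(x) = sup {r ∈ ℝ : u(x⁰ + x − r·g) ≥ u(x⁰)}`,
the supremum being taken in `ℝ ∪ {±∞}`. -/
def indiff {J : Type*} [Fintype J] (u : EuclideanSpace ℝ J → EReal)
    (x0 g x : EuclideanSpace ℝ J) : EReal :=
  sSup {e : EReal | ∃ r : ℝ, e = (r : EReal) ∧ u x0 ≤ u (x0 + x - r • g)}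

/-- `p` is a supergradient of `D` at `xb`: `D xb` is finite and
`D x ≤ D xb + p·(x − xb)` for all `x`. -/
def IsSupergradient {J : Type*} [Fintype J] (D : EuclideanSpace ℝ J → EReal)
    (p xb : EuclideanSpace ℝ J) : Prop :=
  D xb ≠ ⊥ ∧ D xb ≠ ⊤ ∧ ∀ x, D x ≤ D xb + ((dotp p (x - xb) : ℝ) : EReal)

/-- Optimal value `v(z)` of the perturbed market clearing problem `(P_z)`. -/
def marketValue {I J : Type*} [Fintype I] [Fintype J]
    (D : I → EuclideanSpace ℝ J → EReal) (z : EuclideanSpace ℝ J) : EReal :=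
  sSup {e : EReal | ∃ x : I → EuclideanSpace ℝ J, (∑ i, x i) = z ∧ e = ∑ i, D i (x i)}

/-- Optimal value of problem `(P')`, the total consumer surplus at allocation `w`. -/
def CSval {I J : Type*} [Fintype I] [Fintype J]
    (u : I → EuclideanSpace ℝ J → EReal) (g : EuclideanSpace ℝ J)
    (w : I → EuclideanSpace ℝ J) : EReal :=
  sSup {e : EReal | ∃ s : ℝ, e = (s : EReal) ∧ ∃ z : I → EuclideanSpace ℝ J,
    (∑ i, z i) + s • g = ∑ i, w i ∧ ∀ i, u i (w i) ≤ u i (z i)}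

/-- Recession function `u^∞(y) = inf_{α>0} (u(x⁰ + α·y) − u(x⁰))/α`. -/
def recession {J : Type*} [Fintype J] (u : EuclideanSpace ℝ J → EReal)
    (x0 y : EuclideanSpace ℝ J) : EReal :=
  sInf {e : EReal | ∃ α : ℝ, 0 < α ∧ e = (u (x0 + α • y) - u x0) / (α : EReal)}

/-- Pareto efficiency of an allocation `x` with total endowment `∑ i, x i`. -/
def ParetoEfficient {I J : Type*} [Fintype I] [Fintype J]
    (u : I → EuclideanSpace ℝ J → EReal) (x : I → EuclideanSpace ℝ J) : Prop :=
  ¬ ∃ x' : I → EuclideanSpace ℝ J, (∑ i, x' i) = (∑ i, x i) ∧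
      (∀ i, u i (x i) ≤ u i (x' i)) ∧ ∃ i, u i (x i) < u i (x' i)

/-- properties of the indifference price function (Lemma `usc`). -/
theorem indiff_concave_usc_translation
    {J : Type*} [Fintype J] [Nonempty J]
    (u : EuclideanSpace ℝ J → EReal) (g x0 : EuclideanSpace ℝ J)
    (husc : UpperSemicontinuous u)
    (hconc : HypoConcave u)
    (hne_top : ∀ x, u x ≠ ⊤)
    (hx0 : u x0 ≠ ⊥)
    (hmono : ∀ x, ∀ r : ℝ, u x ≠ ⊥ → 0 < r → u x < u (x + r • g)) :
    HypoConcave (indiff u x0 g) ∧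
    UpperSemicontinuous (indiff u x0 g) ∧
    indiff u x0 g 0 = 0 ∧
    (∀ x : EuclideanSpace ℝ J, ∀ r : ℝ, indiff u x0 g x ≠ ⊥ →
      indiff u x0 g (x + r • g) = indiff u x0 g x + (r : EReal)) := by
  classical
  set D := indiff u x0 g with hDdef
  have hmem_le : ∀ (x : EuclideanSpace ℝ J) (r : ℝ),
      u x0 ≤ u (x0 + x - r • g) → (r : EReal) ≤ D x := by
    intro x r h
    exact le_sSup ⟨r, rfl, h⟩
  have hdown : ∀ (x : EuclideanSpace ℝ J) (r s : ℝ),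
      u x0 ≤ u (x0 + x - r • g) → s ≤ r → u x0 ≤ u (x0 + x - s • g) := by
    intro x r s h hsr
    rcases eq_or_lt_of_le hsr with h' | h'
    · subst h'; exact h
    · have hne : u (x0 + x - r • g) ≠ ⊥ := fun hb => hx0 (le_bot_iff.mp (hb ▸ h))
      have hm := hmono (x0 + x - r • g) (r - s) hne (by linarith)
      have heq : x0 + x - r • g + (r - s) • g = x0 + x - s • g := by module
      rw [heq] at hm
      exact h.trans hm.le
  have hub : ∀ (x : EuclideanSpace ℝ J) (s : ℝ),
      ¬ u x0 ≤ u (x0 + x - s • g) → D x ≤ (s : EReal) := by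
    intro x s hns
    refine sSup_le ?_
    rintro e ⟨r, rfl, hr⟩
    by_contra hc
    push_neg at hc
    have hsr : s ≤ r := by exact_mod_cast hc.le
    exact hns (hdown x r s hr hsr)
  have hlt_mem : ∀ (x : EuclideanSpace ℝ J) (s : ℝ),
      (s : EReal) < D x → u x0 ≤ u (x0 + x - s • g) := by
    intro x s hs
    by_contra hns
    exact absurd (hub x s hns) (not_le.mpr hs)
  have haux : ∀ (c : ℝ) (M : EReal), (∀ t : ℝ, t < c → (t : EReal) ≤ M) →
      (c : EReal) ≤ M := by
    intro c M h
    by_contra hc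
    push_neg at hc
    obtain ⟨t, ht1, ht2⟩ := EReal.exists_between_coe_real hc
    exact absurd (h t (by exact_mod_cast ht2)) (not_le.mpr ht1)
  obtain ⟨c, hc⟩ : ∃ c : ℝ, u x0 = (c : EReal) :=
    ⟨(u x0).toReal, (EReal.coe_toReal (hne_top x0) hx0).symm⟩
  refine ⟨?_, ?_, ?_, ?_⟩
  · -- concavity
    rintro ⟨x1, t1⟩ h1 ⟨x2, t2⟩ h2 a b ha hb hab
    simp only [Set.mem_setOf_eq] at h1 h2
    show ((a * t1 + b * t2 : ℝ) : EReal) ≤ D (a • x1 + b • x2)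
    refine haux _ _ ?_
    intro t ht
    have hb' : b = 1 - a := by linarith
    subst hb'
    set ε : ℝ := a * t1 + (1 - a) * t2 - t with hε
    have hε0 : 0 < ε := by simp only [hε]; linarith
    have hs1 : u x0 ≤ u (x0 + x1 - (t1 - ε) • g) := by
      refine hlt_mem x1 (t1 - ε) (lt_of_lt_of_le ?_ h1)
      exact_mod_cast (by linarith : t1 - ε < t1)
    have hs2 : u x0 ≤ u (x0 + x2 - (t2 - ε) • g) := by
      refine hlt_mem x2 (t2 - ε) (lt_of_lt_of_le ?_ h2)
      exact_mod_cast (by linarith : t2 - ε < t2)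
    have hp1 : ((x0 + x1 - (t1 - ε) • g, c) : EuclideanSpace ℝ J × ℝ)
        ∈ {q : EuclideanSpace ℝ J × ℝ | (q.2 : EReal) ≤ u q.1} := by
      simp only [Set.mem_setOf_eq, ← hc]; exact hs1
    have hp2 : ((x0 + x2 - (t2 - ε) • g, c) : EuclideanSpace ℝ J × ℝ)
        ∈ {q : EuclideanSpace ℝ J × ℝ | (q.2 : EReal) ≤ u q.1} := by
      simp only [Set.mem_setOf_eq, ← hc]; exact hs2
    have hmem := hconc hp1 hp2 ha hb hab
    simp only [Prod.smul_mk, Prod.mk_add_mk, Set.mem_setOf_eq, smul_eq_mul] at hmem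
    have hcc : a * c + (1 - a) * c = c := by ring
    rw [hcc] at hmem
    have hst : a * (t1 - ε) + (1 - a) * (t2 - ε) = t := by simp only [hε]; ring
    have hvec : a • (x0 + x1 - (t1 - ε) • g) + (1 - a) • (x0 + x2 - (t2 - ε) • g)
        = x0 + (a • x1 + (1 - a) • x2) - t • g := by
      rw [← hst]; module
    rw [hvec] at hmem
    exact hmem_le _ t (hc ▸ hmem)
  · -- upper semicontinuity
    intro x y hxy
    obtain ⟨s, hs1, hs2⟩ := EReal.exists_between_coe_real hxy
    have hns : ¬ u x0 ≤ u (x0 + x - s • g) := fun h =>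
      absurd (hmem_le x s h) (not_le.mpr hs1)
    have hlt : u (x0 + x - s • g) < u x0 := not_le.mp hns
    have hcont : Continuous fun x' : EuclideanSpace ℝ J => x0 + x' - s • g :=
      (continuous_const.add continuous_id).sub continuous_const
    have hev := (hcont.tendsto x).eventually (husc (x0 + x - s • g) (u x0) hlt)
    filter_upwards [hev] with x' hx'
    exact lt_of_le_of_lt (hub x' s (not_le.mpr hx')) hs2
  · -- D 0 = 0
    have h0 : u x0 ≤ u (x0 + 0 - (0 : ℝ) • g) := by
      have heq : x0 + (0 : EuclideanSpace ℝ J) - (0 : ℝ) • g = x0 := by module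
      rw [heq]
    apply le_antisymm
    · refine sSup_le ?_
      rintro e ⟨r, rfl, hr⟩
      have hr0 : r ≤ 0 := by
        by_contra hcr
        push_neg at hcr
        have hne : u (x0 + 0 - r • g) ≠ ⊥ := fun hb => hx0 (le_bot_iff.mp (hb ▸ hr))
        have hm := hmono (x0 + 0 - r • g) r hne hcr
        have heq : x0 + (0 : EuclideanSpace ℝ J) - r • g + r • g = x0 := by module
        rw [heq] at hm
        exact absurd (lt_of_le_of_lt hr hm) (lt_irrefl _)
      exact_mod_cast hr0
    · simpa using hmem_le 0 0 h0
  · -- translation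
    intro x r hbot
    have key : ∀ s : ℝ, x0 + (x + r • g) - s • g = x0 + x - (s - r) • g := by
      intro s; module
    rcases eq_or_ne (D x) ⊤ with htop | htop
    · rw [htop]
      have hDtop : D (x + r • g) = ⊤ := by
        by_contra hnt
        obtain ⟨M, hM1, hM2⟩ := EReal.exists_between_coe_real (lt_top_iff_ne_top.mpr hnt)
        have hmem : u x0 ≤ u (x0 + x - (M - r) • g) := by
          refine hlt_mem x (M - r) ?_
          rw [htop]; exact EReal.coe_lt_top _
        have := hmem_le (x + r • g) M (by rw [key M]; exact hmem)
        exact absurd (lt_of_le_of_lt this hM1) (lt_irrefl _)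
      rw [hDtop]
      exact (EReal.top_add_coe r).symm ▸ rfl
    · obtain ⟨d, hd⟩ : ∃ d : ℝ, D x = (d : EReal) :=
        ⟨(D x).toReal, (EReal.coe_toReal htop hbot).symm⟩
      rw [hd, ← EReal.coe_add]
      apply le_antisymm
      · refine sSup_le ?_
        rintro e ⟨s, rfl, hs⟩
        rw [key s] at hs
        have := hmem_le x (s - r) hs
        rw [hd] at this
        have hsd : s - r ≤ d := by exact_mod_cast this
        exact_mod_cast (by linarith : s ≤ d + r)
      · refine haux _ _ ?_
        intro t ht
        have hmem : u x0 ≤ u (x0 + x - (t - r) • g) := by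
          refine hlt_mem x (t - r) ?_
          rw [hd]
          exact_mod_cast (by linarith : t - r < d)
        exact hmem_le (x + r • g) t (by rw [key t]; exact hmem)
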